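/- For k ≥ 3, x_1 ∈ [1/2, 1], and real y with 0 ≤ y < 2/5, the function f_2(x_1, y) = (-5k²/6 + 4k/3 - 1/2)y³ + ((k-1)(k + x_1 - 1)/2)y² + ((k-1)(5x_1² - 6x_1 + 2)/2)y + (x_1 - 3x_1²/2 + 5x_1³/6 - 1/6) has ∂f_2/∂y > 0; in particular f_2(x_1, ·) is strictly increasing on [0, 2/5). -/

import Mathlib

lemma f2_hasDerivAt (a b c d y : ℝ) :
    HasDerivAt (fun y : ℝ => a * y ^ 3 + b * y ^ 2 + c * y + d)
      (a * (3 * y ^ 2) + b * (2 * y) + c) y := by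
  have h1 := ((hasDerivAt_pow 3 y).const_mul a)
  have h2 := ((hasDerivAt_pow 2 y).const_mul b)
  have h3 := (hasDerivAt_id y).const_mul c
  have := ((h1.add h2).add h3).add_const d
  exact this.congr_deriv (by norm_num)

theorem f2_strict_mono {k : ℕ} (hk : 3 ≤ k) (x1 : ℝ) (hx1 : 1 / 2 ≤ x1) (hx1' : x1 ≤ 1) :
    (∀ y ∈ Set.Ico (0 : ℝ) (2 / 5),
        0 < deriv (fun y : ℝ =>
          (-5 * (k : ℝ) ^ 2 / 6 + 4 * (k : ℝ) / 3 - 1 / 2) * y ^ 3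
            + ((k : ℝ) - 1) * ((k : ℝ) + x1 - 1) / 2 * y ^ 2
            + ((k : ℝ) - 1) * (5 * x1 ^ 2 - 6 * x1 + 2) / 2 * y
            + (x1 - 3 * x1 ^ 2 / 2 + 5 * x1 ^ 3 / 6 - 1 / 6)) y)
      ∧ StrictMonoOn (fun y : ℝ =>
          (-5 * (k : ℝ) ^ 2 / 6 + 4 * (k : ℝ) / 3 - 1 / 2) * y ^ 3
            + ((k : ℝ) - 1) * ((k : ℝ) + x1 - 1) / 2 * y ^ 2
            + ((k : ℝ) - 1) * (5 * x1 ^ 2 - 6 * x1 + 2) / 2 * y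
            + (x1 - 3 * x1 ^ 2 / 2 + 5 * x1 ^ 3 / 6 - 1 / 6))
          (Set.Ico (0 : ℝ) (2 / 5)) := by
  have hk' : (3 : ℝ) ≤ (k : ℝ) := by exact_mod_cast hk
  set a : ℝ := -5 * (k : ℝ) ^ 2 / 6 + 4 * (k : ℝ) / 3 - 1 / 2 with ha
  set b : ℝ := ((k : ℝ) - 1) * ((k : ℝ) + x1 - 1) / 2 with hb
  set c : ℝ := ((k : ℝ) - 1) * (5 * x1 ^ 2 - 6 * x1 + 2) / 2 with hc
  set d : ℝ := x1 - 3 * x1 ^ 2 / 2 + 5 * x1 ^ 3 / 6 - 1 / 6 with hd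
  have hderiv : ∀ y : ℝ, deriv (fun y : ℝ => a * y ^ 3 + b * y ^ 2 + c * y + d) y
      = a * (3 * y ^ 2) + b * (2 * y) + c := fun y => (f2_hasDerivAt a b c d y).deriv
  have hpos : ∀ y ∈ Set.Ico (0 : ℝ) (2 / 5),
      0 < deriv (fun y : ℝ => a * y ^ 3 + b * y ^ 2 + c * y + d) y := by
    intro y hy
    obtain ⟨hy0, hy1⟩ := hy
    rw [hderiv]
    have hq : 5 * x1 ^ 2 - 6 * x1 + 2 > 0 := by nlinarith [sq_nonneg (5 * x1 - 3)]
    have hy2 : y ^ 2 ≤ (2 / 5) * y := by nlinarith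
    rw [ha, hb, hc]
    nlinarith [mul_nonneg (sub_nonneg.2 hk') hy0, sq_nonneg y,
      mul_nonneg (mul_nonneg (sub_nonneg.2 (by linarith : (1:ℝ) ≤ k)) (by linarith : (0:ℝ) ≤ 5 * (k:ℝ) - 3)) (sub_nonneg.2 hy2),
      mul_nonneg (sub_nonneg.2 (by linarith : (1:ℝ) ≤ k)) (mul_nonneg (by linarith : (0:ℝ) ≤ 2 * x1 - 4/5) hy0)]
  refine ⟨hpos, ?_⟩
  apply strictMonoOn_of_deriv_pos (convex_Ico 0 (2/5))
  · exact (Continuous.continuousOn (by fun_prop))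
  · intro y hy
    rw [interior_Ico] at hy
    exact hpos y ⟨le_of_lt hy.1, hy.2⟩
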